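/- Let k ∈ ℕ and let p : ℝⁿ → ℂ be a continuous function such that for every multi-index a ∈ ℕⁿ with |a| ≤ k there is a constant C_a with |η^a p(η)| ≤ C_a (1 + ‖η‖_H)^{−d_H − 1} for all η ∈ ℝⁿ. Then p is Lebesgue integrable on ℝⁿ and the function f(ξ) = ∫_{ℝⁿ} e^{2πi⟨ξ,η⟩} p(η) dη is of class C^k on ℝⁿ. -/

import Mathlib

open scoped BigOperators

/-- Homogeneous norm `‖η‖_H = max_i |η_i|^(1/d_i)`. -/
noncomputable def hnorm {n : ℕ} (d : Fin n → ℕ) (η : Fin n → ℝ) : ℝ :=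
  ⨆ i, |η i| ^ ((d i : ℝ)⁻¹)

/-- Monomial `η^a = ∏ i, η i ^ a i`. -/
def mono {n : ℕ} (a : Fin n → ℕ) (η : Fin n → ℝ) : ℝ := ∏ i, η i ^ a i

/-- The standard pairing `⟨ξ, η⟩ = ∑ i, ξ i * η i` on `ℝⁿ`. -/
def dotp {n : ℕ} (ξ η : Fin n → ℝ) : ℝ := ∑ i, ξ i * η i

open MeasureTheory Real Finset

lemma aux_rpow_one_add_le {x s : ℝ} (hx : 0 ≤ x) (hs0 : 0 ≤ s) (hs1 : s ≤ 1) :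
    (1 + x) ^ s ≤ 1 + x ^ s := by
  have h := NNReal.rpow_add_le_add_rpow 1 x.toNNReal hs0 hs1
  have h2 := NNReal.coe_le_coe.2 h
  simpa [NNReal.coe_rpow, Real.coe_toNNReal x hx] using h2

lemma aux_integrable_1d (d : ℕ) (hd : 1 ≤ d) {c : ℝ} (hc : (d : ℝ) < c) :
    Integrable (fun t : ℝ => (1 + |t| ^ ((d : ℝ)⁻¹)) ^ (-c)) := by
  have hd0 : (0 : ℝ) < d := by exact_mod_cast hd
  have hinv0 : (0 : ℝ) < (d : ℝ)⁻¹ := by positivity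
  have hinv1 : ((d : ℝ))⁻¹ ≤ 1 := by
    rw [inv_le_one_iff₀]; right; exact_mod_cast hd
  have hcr : (1 : ℝ) < c / d := (one_lt_div hd0).2 hc
  have big : Integrable (fun t : ℝ => (1 + ‖t‖) ^ (-(c / d))) := by
    apply integrable_one_add_norm (E := ℝ)
    simpa using hcr
  refine big.mono' (Continuous.aestronglyMeasurable ?_) (Filter.Eventually.of_forall fun t => ?_)
  · apply Continuous.rpow_const
    · exact continuous_const.add (continuous_abs.rpow_const (fun x => Or.inr hinv0.le))
    · intro t; left; positivity
  · have h0 : (0:ℝ) ≤ 1 + |t| := by positivity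
    rw [Real.norm_of_nonneg (by positivity)]
    have step1 : (1 + |t| ^ ((d : ℝ)⁻¹)) ^ (-c) ≤ ((1 + |t|) ^ ((d : ℝ)⁻¹)) ^ (-c) := by
      apply Real.rpow_le_rpow_of_nonpos (by positivity)
        (aux_rpow_one_add_le (abs_nonneg t) hinv0.le hinv1)
      linarith
    calc (1 + |t| ^ ((d : ℝ)⁻¹)) ^ (-c) ≤ ((1 + |t|) ^ ((d : ℝ)⁻¹)) ^ (-c) := step1
      _ = (1 + |t|) ^ (-(c / d)) := by
          rw [← Real.rpow_mul h0]
          congr 1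
          field_simp
      _ = (1 + ‖t‖) ^ (-(c / d)) := by rw [Real.norm_eq_abs]

lemma hnorm_nonneg {n : ℕ} (d : Fin n → ℕ) (η : Fin n → ℝ) : 0 ≤ hnorm d η := by
  rcases isEmpty_or_nonempty (Fin n) with h | h
  · simp [hnorm]
  · exact Real.iSup_nonneg fun i => Real.rpow_nonneg (abs_nonneg _) _

lemma le_hnorm {n : ℕ} (d : Fin n → ℕ) (η : Fin n → ℝ) (i : Fin n) :
    |η i| ^ ((d i : ℝ)⁻¹) ≤ hnorm d η :=
  le_ciSup (f := fun j => |η j| ^ ((d j : ℝ)⁻¹))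
    (Set.Finite.bddAbove (Set.finite_range _)) i

lemma hnorm_continuous {n : ℕ} (hn : 0 < n) (d : Fin n → ℕ) :
    Continuous (hnorm d) := by
  have : Nonempty (Fin n) := ⟨⟨0, hn⟩⟩
  have hrw : hnorm d = fun η => Finset.univ.sup' Finset.univ_nonempty
      (fun i => |η i| ^ ((d i : ℝ)⁻¹)) := by
    funext η
    rw [Finset.sup'_univ_eq_ciSup]
    rfl
  rw [hrw]
  rw [continuous_iff_continuousAt]
  intro x
  apply ContinuousAt.finset_sup'_apply
  intro i _
  have hco : Continuous fun η : Fin n → ℝ => |η i| ^ ((d i : ℝ)⁻¹) := by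
    apply Continuous.rpow_const ((continuous_apply i).abs)
    intro a; right; positivity
  exact hco.continuousAt

lemma weight_integrable {n : ℕ} (hn : 0 < n) (d : Fin n → ℕ) (hd : ∀ i, 1 ≤ d i) :
    Integrable (fun η : Fin n → ℝ =>
      (1 + hnorm d η) ^ (-(∑ i, d i : ℕ) - 1 : ℝ)) := by
  have hnR : (0:ℝ) < n := by exact_mod_cast hn
  set c : Fin n → ℝ := fun i => (d i : ℝ) + (n : ℝ)⁻¹ with hc
  have hci : ∀ i, 0 ≤ c i := fun i => by positivity
  have hgi : ∀ i : Fin n, Integrable (fun t : ℝ => (1 + |t| ^ ((d i : ℝ)⁻¹)) ^ (-(c i))) :=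
    fun i => aux_integrable_1d (d i) (hd i) (lt_add_of_pos_right _ (by positivity))
  have hprod : Integrable (fun η : Fin n → ℝ =>
      ∏ i, (1 + |η i| ^ ((d i : ℝ)⁻¹)) ^ (-(c i))) :=
    Integrable.fintype_prod (𝕜 := ℝ) hgi
  refine hprod.mono' ?_ (Filter.Eventually.of_forall fun η => ?_)
  · apply Continuous.aestronglyMeasurable
    apply Continuous.rpow_const (continuous_const.add (hnorm_continuous hn d))
    intro η; left
    have := hnorm_nonneg d η
    exact (show (0:ℝ) < 1 + hnorm d η by linarith).ne'
  · have hM0 : 0 ≤ hnorm d η := hnorm_nonneg d η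
    have h1M : (0:ℝ) < 1 + hnorm d η := by linarith
    rw [Real.norm_of_nonneg (Real.rpow_nonneg h1M.le _)]
    have key : ∏ i, (1 + |η i| ^ ((d i : ℝ)⁻¹)) ^ (c i)
        ≤ (1 + hnorm d η) ^ ((∑ i, d i : ℕ) + 1 : ℝ) := by
      have step1 : ∏ i, (1 + |η i| ^ ((d i : ℝ)⁻¹)) ^ (c i)
          ≤ ∏ i, (1 + hnorm d η) ^ (c i) := by
        apply Finset.prod_le_prod
        · intro i _; positivity
        · intro i _
          exact Real.rpow_le_rpow (by positivity)
            (by linarith [le_hnorm d η i]) (hci i)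
      have step2 : ∏ i, (1 + hnorm d η) ^ (c i)
          = (1 + hnorm d η) ^ ((∑ i, d i : ℕ) + 1 : ℝ) := by
        rw [← Real.rpow_sum_of_pos h1M]
        congr 1
        rw [hc]
        rw [Finset.sum_add_distrib, Finset.sum_const, card_univ, Fintype.card_fin]
        push_cast
        rw [nsmul_eq_mul]
        rw [mul_inv_cancel₀ (by positivity : (n:ℝ) ≠ 0)]
      exact step1.trans_eq step2
    have hrw : (-(∑ i, d i : ℕ) - 1 : ℝ) = -(((∑ i, d i : ℕ) + 1 : ℝ)) := by ring
    rw [hrw, Real.rpow_neg h1M.le]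
    have hrw2 : ∀ i, (1 + |η i| ^ ((d i : ℝ)⁻¹)) ^ (-(c i))
        = ((1 + |η i| ^ ((d i : ℝ)⁻¹)) ^ (c i))⁻¹ := fun i =>
      Real.rpow_neg (by positivity) _
    simp_rw [hrw2]
    rw [Finset.prod_inv_distrib]
    apply inv_anti₀
    · apply Finset.prod_pos; intro i _; positivity
    · exact key

theorem stmt11 {n : ℕ} (d : Fin n → ℕ) (hd : ∀ i, 1 ≤ d i) (k : ℕ)
    (p : (Fin n → ℝ) → ℂ) (hp : Continuous p)
    (hdecay : ∀ a : Fin n → ℕ, (∑ i, a i) ≤ k → ∃ C : ℝ, ∀ η : Fin n → ℝ,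
      ‖(mono a η : ℂ) * p η‖ ≤
        C * (1 + hnorm d η) ^ (-(∑ i, d i : ℕ) - 1 : ℝ)) :
    MeasureTheory.Integrable p ∧
    ContDiff ℝ (k : ℕ∞)
      (fun ξ : Fin n → ℝ => ∫ η : Fin n → ℝ,
        Complex.exp (2 * (Real.pi : ℂ) * Complex.I * (dotp ξ η : ℝ)) * p η) := by
  rcases Nat.eq_zero_or_pos n with rfl | hn
  · -- trivial case n = 0
    have huniv : (volume : Measure (Fin 0 → ℝ)) Set.univ = 1 := by
      rw [show (Set.univ : Set (Fin 0 → ℝ))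
          = Set.univ.pi (fun _ : Fin 0 => (Set.univ : Set ℝ)) by simp]
      rw [volume_pi_pi]
      simp
    have : IsFiniteMeasure (volume : Measure (Fin 0 → ℝ)) := ⟨by simp [huniv]⟩
    have hconst : p = fun _ => p default := funext fun η => by
      rw [Subsingleton.elim η default]
    constructor
    · rw [hconst]; exact integrable_const _
    · have : (fun ξ : Fin 0 → ℝ => ∫ η : Fin 0 → ℝ,
          Complex.exp (2 * (Real.pi : ℂ) * Complex.I * (dotp ξ η : ℝ)) * p η)
          = fun _ => ∫ η : Fin 0 → ℝ, p η := by
        funext ξ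
        congr 1
        funext η
        simp [dotp]
      rw [this]
      exact contDiff_const
  · -- main case
    set w : (Fin n → ℝ) → ℝ :=
      fun η => (1 + hnorm d η) ^ (-(∑ i, d i : ℕ) - 1 : ℝ) with hwdef
    have hw_int : Integrable w := weight_integrable hn d hd
    have hw_nonneg : ∀ η, 0 ≤ w η := fun η => by
      have := hnorm_nonneg d η
      positivity
    obtain ⟨C0, hC0⟩ := hdecay 0 (by simp)
    have hp_int : Integrable p := by
      refine (hw_int.const_mul C0).mono' hp.aestronglyMeasurable
        (Filter.Eventually.of_forall fun η => ?_)
      have h := hC0 η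
      have hm0 : mono (0 : Fin n → ℕ) η = 1 := by simp [mono]
      rw [hm0, Complex.ofReal_one, one_mul] at h
      exact h
    refine ⟨hp_int, ?_⟩
    set me := (MeasurableEquiv.toLp 2 (Fin n → ℝ)).symm with hme
    have mp := EuclideanSpace.volume_preserving_symm_measurableEquiv_toLp (Fin n)
    set q : EuclideanSpace ℝ (Fin n) → ℂ := fun v => p (me v) with hq
    have hq_meas : Measurable q := hp.measurable.comp me.measurable
    have hwE : Integrable (fun v : EuclideanSpace ℝ (Fin n) => w (me v)) :=
      (mp.integrable_comp_emb me.measurableEmbedding).2 hw_int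
    have hmom : ∀ m : ℕ, (m : ℕ∞) ≤ (k : ℕ∞) →
        Integrable (fun v : EuclideanSpace ℝ (Fin n) => ‖v‖ ^ m * ‖q v‖) := by
      intro m hm
      have hmk : m ≤ k := by exact_mod_cast hm
      have hsum : ∀ j : Fin n, (∑ i, (fun i => if i = j then m else 0) i) ≤ k := by
        intro j
        simp only [Finset.sum_ite_eq', Finset.mem_univ, if_true]
        exact hmk
      choose C hC using fun j : Fin n =>
        hdecay (fun i => if i = j then m else 0) (hsum j)
      set Ct : ℝ := ∑ j, max (C j) 0 with hCt
      have hCtle : ∀ j, C j ≤ Ct := fun j =>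
        le_trans (le_max_left _ _)
          (Finset.single_le_sum (f := fun i => max (C i) 0)
            (fun i _ => le_max_right _ _) (Finset.mem_univ j))
      refine ((hwE.const_mul ((n:ℝ)^m * Ct)).mono' ?_
        (Filter.Eventually.of_forall fun v => ?_))
      · exact ((measurable_norm.pow_const m).mul hq_meas.norm).aestronglyMeasurable
      · set η : Fin n → ℝ := me v with hη
        obtain ⟨j, _, hj⟩ := Finset.exists_max_image (Finset.univ : Finset (Fin n))
          (fun i => |η i|) ⟨⟨0, hn⟩, Finset.mem_univ _⟩
        have hnR : (1:ℝ) ≤ n := by exact_mod_cast hn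
        have hnorm_le : ‖v‖ ≤ (n : ℝ) * |η j| := by
          rw [EuclideanSpace.norm_eq]
          have h1 : ∑ i, ‖v i‖^2 ≤ (n:ℝ) * |η j|^2 := by
            calc ∑ i, ‖v i‖^2 ≤ ∑ _i : Fin n, |η j|^2 := by
                  apply Finset.sum_le_sum
                  intro i _
                  rw [Real.norm_eq_abs]
                  exact pow_le_pow_left₀ (abs_nonneg _) (hj i (Finset.mem_univ i)) 2
              _ = (n:ℝ) * |η j|^2 := by
                  rw [Finset.sum_const, card_univ, Fintype.card_fin, nsmul_eq_mul]
          have h2 : (n:ℝ) * |η j|^2 ≤ ((n:ℝ) * |η j|)^2 := by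
            have h3 : (0:ℝ) ≤ |η j| := abs_nonneg _
            nlinarith
          calc Real.sqrt (∑ i, ‖v i‖^2) ≤ Real.sqrt (((n:ℝ) * |η j|)^2) :=
                Real.sqrt_le_sqrt (h1.trans h2)
            _ = (n:ℝ) * |η j| := Real.sqrt_sq (by positivity)
        have hb := hC j η
        have hmono : mono (fun i => if i = j then m else 0) η = η j ^ m := by
          simp [mono, pow_ite, Finset.prod_ite_eq', pow_zero]
        have hnq : ‖q v‖ = ‖p η‖ := rfl
        have hkey : |η j| ^ m * ‖p η‖ ≤ Ct * w η := by
          have h4 : ‖((mono (fun i => if i = j then m else 0) η : ℝ) : ℂ) * p η‖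
              = |η j| ^ m * ‖p η‖ := by
            rw [norm_mul, Complex.norm_real, Real.norm_eq_abs, hmono, abs_pow]
          have h5 := hb.trans (mul_le_mul_of_nonneg_right (hCtle j) (by
            have := hnorm_nonneg d η
            positivity))
          rw [h4] at h5
          exact h5
        rw [Real.norm_of_nonneg (by positivity)]
        calc ‖v‖ ^ m * ‖q v‖ ≤ ((n:ℝ) * |η j|) ^ m * ‖p η‖ := by
              rw [hnq]
              exact mul_le_mul_of_nonneg_right
                (pow_le_pow_left₀ (norm_nonneg v) hnorm_le m) (norm_nonneg _)
          _ = (n:ℝ)^m * (|η j| ^ m * ‖p η‖) := by rw [mul_pow]; ring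
          _ ≤ (n:ℝ)^m * (Ct * w η) := by
              apply mul_le_mul_of_nonneg_left hkey (by positivity)
          _ = (n:ℝ)^m * Ct * w (me v) := by rw [← hη]; ring
    have hFT : ContDiff ℝ (k : ℕ∞) (FourierTransform.fourier q) :=
      Real.contDiff_fourier (fun m hm => hmom m hm)
    have hFTinv : ContDiff ℝ (k : ℕ∞) (FourierTransformInv.fourierInv q) := by
      have hEq : FourierTransformInv.fourierInv q = fun w => FourierTransform.fourier q (-w) :=
        funext fun w => Real.fourierInv_eq_fourier_neg q w
      rw [hEq]
      exact hFT.comp contDiff_neg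
    have hfun : (fun ξ : Fin n → ℝ => ∫ η : Fin n → ℝ,
          Complex.exp (2 * (Real.pi : ℂ) * Complex.I * (dotp ξ η : ℝ)) * p η)
        = fun ξ => FourierTransformInv.fourierInv q
            ((EuclideanSpace.equiv (Fin n) ℝ).symm ξ) := by
      funext ξ
      rw [Real.fourierInv_eq']
      rw [← MeasurePreserving.integral_comp mp me.measurableEmbedding
        (fun η => Complex.exp (2 * (Real.pi : ℂ) * Complex.I * (dotp ξ η : ℝ)) * p η)]
      congr 1
      funext v
      rw [smul_eq_mul]
      congr 1
      have hip : (inner ℝ v ((EuclideanSpace.equiv (Fin n) ℝ).symm ξ) : ℝ)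
          = dotp ξ (me v) := by
        rw [PiLp.inner_apply]
        simp only [RCLike.inner_apply, conj_trivial]
        exact Finset.sum_congr rfl fun i _ => by rfl
      rw [hip]
      push_cast
      ring_nf
      rfl
    rw [hfun]
    exact hFTinv.comp
      (EuclideanSpace.equiv (Fin n) ℝ).symm.contDiff
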